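/- For every natural number n there exists an injective group homomorphism from the free group FreeGroup(Fin n) on n generators into SU(2); i.e., SU(2) contains a subgroup freely generated by n elements. -/

import Mathlib

/-- `SU2` is the special unitary group SU(2): the group of 2×2 complex unitary
matrices with determinant 1, realized as a subgroup of the unitary group. -/
def SU2 : Subgroup (Matrix.unitaryGroup (Fin 2) ℂ) where
  carrier := {A | (A : Matrix (Fin 2) (Fin 2) ℂ).det = 1}
  one_mem' := by simp
  mul_mem' := by
    intro a b ha hb
    simp only [Set.mem_setOf_eq] at *
    show ((a : Matrix (Fin 2) (Fin 2) ℂ) * (b : Matrix (Fin 2) (Fin 2) ℂ)).det = 1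
    rw [Matrix.det_mul, ha, hb, one_mul]
  inv_mem' := by
    intro a ha
    simp only [Set.mem_setOf_eq] at *
    show ((a⁻¹ : Matrix.unitaryGroup (Fin 2) ℂ) : Matrix (Fin 2) (Fin 2) ℂ).det = 1
    rw [Matrix.UnitaryGroup.inv_val, Matrix.star_eq_conjTranspose, Matrix.det_conjTranspose, ha,
      star_one]

/-- The underlying 2×2 complex matrix of an element of SU(2). -/
def SU2.toMatrix (g : SU2) : Matrix (Fin 2) (Fin 2) ℂ := g.val.val

/-- The trace of (the matrix of) an element of SU(2). -/
noncomputable def SU2.trace (g : SU2) : ℂ := Matrix.trace (SU2.toMatrix g)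

/- ### Auxiliary development: a ping-pong argument inside SU(2).

We use the two matrices `A = diag((3+4i)/5, (3-4i)/5)` and `B = (1/5)!![3,4;-4,3]`
of SU(2), and show via the ping-pong lemma (acting on complex 2-vectors which are
scalar multiples of Gaussian-integer vectors with nonzero reduction mod the prime
2+i of norm 5) that the elements `A^i B A^{-i}` generate a free group. -/

noncomputable section
namespace SU2PingPong
open GaussianInt Complex Matrix
open scoped Pointwise

/-- Ring hom ℤ[i] → 𝔽₅ sending i ↦ 3; its kernel is the ideal generated by 2+i. -/
def phi : GaussianInt →+* ZMod 5 := Zsqrtd.lift ⟨3, by decide⟩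

lemma phi_apply (x : GaussianInt) : phi x = (x.re : ZMod 5) + (x.im : ZMod 5) * 3 := rfl

lemma dvd_of_phi_eq_zero {x : GaussianInt} (h : phi x = 0) :
    ∃ y : GaussianInt, x = ⟨2, 1⟩ * y := by
  have h5 : (5 : ℤ) ∣ x.re + 3 * x.im := by
    have : ((x.re + 3 * x.im : ℤ) : ZMod 5) = 0 := by
      push_cast
      rw [phi_apply] at h
      linear_combination h
    exact (ZMod.intCast_zmod_eq_zero_iff_dvd _ 5).mp this
  obtain ⟨c, hc⟩ := h5
  refine ⟨⟨2 * c - x.im, x.im - c⟩, ?_⟩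
  ext <;> simp [Zsqrtd.re_mul, Zsqrtd.im_mul] <;> omega

/-- Lines through the origin in 𝔽₅², parametrized by slope (`none` = the line c1 = 0). -/
def lineP (m : Option (ZMod 5)) (c0 c1 : ZMod 5) : Prop :=
  m.elim (c1 = 0 ∧ c0 ≠ 0) fun t => c1 ≠ 0 ∧ c0 = t * c1

instance (m : Option (ZMod 5)) (c0 c1 : ZMod 5) : Decidable (lineP m c0 c1) :=
  match m with
  | none => inferInstanceAs (Decidable (_ ∧ _))
  | some _ => inferInstanceAs (Decidable (_ ∧ _))

lemma lineP_exists (c0 c1 : ZMod 5) (h : c0 ≠ 0 ∨ c1 ≠ 0) :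
    ∃ m, lineP m c0 c1 := by
  revert c0 c1; decide

lemma lineP_ne : ∀ (m : Option (ZMod 5)) (c0 c1 : ZMod 5), lineP m c0 c1 →
    c0 ≠ 0 ∨ c1 ≠ 0 := by decide

/-- `v` is a nonzero scalar multiple of a Gaussian-integer vector whose mod-5 class
lies on the line `m`. -/
def inLine (m : Option (ZMod 5)) (v : Fin 2 → ℂ) : Prop :=
  ∃ (u : Fin 2 → GaussianInt) (l : ℂ), l ≠ 0 ∧ (∀ j, v j = l * (u j : ℂ)) ∧
    lineP m (phi (u 0)) (phi (u 1))

/-- `v` is a nonzero scalar multiple of a Gaussian-integer vector with nonzero mod-5 class. -/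
def hasClass (v : Fin 2 → ℂ) : Prop :=
  ∃ (u : Fin 2 → GaussianInt) (l : ℂ), l ≠ 0 ∧ (∀ j, v j = l * (u j : ℂ)) ∧
    (phi (u 0) ≠ 0 ∨ phi (u 1) ≠ 0)

lemma hasClass_of_inLine {m v} (h : inLine m v) : hasClass v := by
  obtain ⟨u, l, hl, hv, hc⟩ := h
  exact ⟨u, l, hl, hv, lineP_ne _ _ _ hc⟩

lemma exists_line_of_hasClass {v} (h : hasClass v) : ∃ m, inLine m v := by
  obtain ⟨u, l, hl, hv, hc⟩ := h
  obtain ⟨m, hm⟩ := lineP_exists _ _ hc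
  exact ⟨m, u, l, hl, hv, hm⟩

/-- The line of a vector is unique. -/
lemma line_unique {m m' : Option (ZMod 5)} {v : Fin 2 → ℂ}
    (h : inLine m v) (h' : inLine m' v) : m = m' := by
  obtain ⟨u, l, hl, hv, hc⟩ := h
  obtain ⟨u', l', hl', hv', hc'⟩ := h'
  have cross : u 0 * u' 1 = u 1 * u' 0 := by
    have e0 : l * (u 0 : ℂ) = l' * (u' 0 : ℂ) := by rw [← hv 0, ← hv' 0]
    have e1 : l * (u 1 : ℂ) = l' * (u' 1 : ℂ) := by rw [← hv 1, ← hv' 1]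
    have : (l * l') * ((u 0 : ℂ) * (u' 1 : ℂ)) = (l * l') * ((u 1 : ℂ) * (u' 0 : ℂ)) := by
      calc (l * l') * ((u 0 : ℂ) * (u' 1 : ℂ)) = (l * (u 0 : ℂ)) * (l' * (u' 1 : ℂ)) := by ring
      _ = (l' * (u' 0 : ℂ)) * (l * (u 1 : ℂ)) := by rw [e0, e1]
      _ = (l * l') * ((u 1 : ℂ) * (u' 0 : ℂ)) := by ring
    have h2 := mul_left_cancel₀ (mul_ne_zero hl hl') this
    apply GaussianInt.toComplex_injective
    rw [_root_.map_mul, _root_.map_mul]; exact h2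
  have key : phi (u 0) * phi (u' 1) = phi (u 1) * phi (u' 0) := by
    rw [← _root_.map_mul, ← _root_.map_mul, cross]
  revert hc hc' key
  generalize phi (u 0) = c0; generalize phi (u 1) = c1
  generalize phi (u' 0) = d0; generalize phi (u' 1) = d1
  revert c0 c1 d0 d1; revert m'; revert m; decide

/-- Descent: any nonzero Gaussian-integer vector is a (2+i)-power multiple of one
with nonzero class mod 5. -/
lemma descend : ∀ (N : ℕ) (u : Fin 2 → GaussianInt),
    (u 0).norm.natAbs + (u 1).norm.natAbs ≤ N → u ≠ 0 →
    ∃ (z : ℂ) (u' : Fin 2 → GaussianInt), z ≠ 0 ∧ (∀ j, (u j : ℂ) = z * (u' j : ℂ)) ∧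
      (phi (u' 0) ≠ 0 ∨ phi (u' 1) ≠ 0) := by
  intro N
  induction N using Nat.strong_induction_on with
  | _ N ih =>
    intro u hN hu
    by_cases hc : phi (u 0) ≠ 0 ∨ phi (u 1) ≠ 0
    · exact ⟨1, u, one_ne_zero, fun j => by rw [one_mul], hc⟩
    · push_neg at hc
      obtain ⟨w0, hw0⟩ := dvd_of_phi_eq_zero hc.1
      obtain ⟨w1, hw1⟩ := dvd_of_phi_eq_zero hc.2
      set w : Fin 2 → GaussianInt := ![w0, w1] with hw
      have hwj : ∀ j, u j = ⟨2, 1⟩ * w j := by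
        intro j; fin_cases j <;> simpa [hw]
      have hwne : w ≠ 0 := by
        intro h0
        apply hu
        funext j; rw [hwj j]
        rw [show w j = 0 from congrFun h0 j, mul_zero]
        rfl
      have hnorm : ∀ j, (u j).norm.natAbs = 5 * (w j).norm.natAbs := by
        intro j
        rw [hwj j, Zsqrtd.norm_mul, Int.natAbs_mul]
        norm_num [Zsqrtd.norm]
      have hpos : 1 ≤ (w 0).norm.natAbs + (w 1).norm.natAbs := by
        rcases Function.ne_iff.mp hwne with ⟨j, hj⟩
        have hj0 : (w j).norm.natAbs ≠ 0 := by
          simp only [Int.natAbs_ne_zero]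
          exact fun h => hj ((Zsqrtd.norm_eq_zero_iff (by norm_num) (w j)).mp h)
        have : j = 0 ∨ j = 1 := by
          rcases j with ⟨v, hv⟩
          interval_cases v <;> simp
        rcases this with rfl | rfl <;> omega
      have hlt : (w 0).norm.natAbs + (w 1).norm.natAbs < N := by
        have h0 := hnorm 0; have h1 := hnorm 1
        omega
      obtain ⟨z, u', hz, hzu, hcl⟩ := ih _ hlt w le_rfl hwne
      refine ⟨((⟨2, 1⟩ : GaussianInt) : ℂ) * z, u', ?_, ?_, hcl⟩
      · apply mul_ne_zero _ hz
        rw [Ne, toComplex_eq_zero]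
        decide
      · intro j
        rw [hwj j, _root_.map_mul, hzu j]; ring

lemma hasClass_of_rep {w : Fin 2 → ℂ} {u : Fin 2 → GaussianInt} {l : ℂ}
    (hl : l ≠ 0) (hw : ∀ j, w j = l * (u j : ℂ)) (hu : u ≠ 0) : hasClass w := by
  obtain ⟨z, u', hz, hzu, hcl⟩ := descend _ u le_rfl hu
  exact ⟨u', l * z, mul_ne_zero hl hz, fun j => by rw [hw j, hzu j, mul_assoc], hcl⟩

/-! ### The two unitary matrices -/

def Amat : Matrix (Fin 2) (Fin 2) ℂ := !![(3 + 4*I)/5, 0; 0, (3 - 4*I)/5]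
def Bmat : Matrix (Fin 2) (Fin 2) ℂ := !![3/5, 4/5; -4/5, 3/5]

lemma mulVec_rep {M : Matrix (Fin 2) (Fin 2) ℂ} {N : Fin 2 → Fin 2 → GaussianInt}
    (hMN : ∀ i j, M i j = (N i j : ℂ) / 5) {v : Fin 2 → ℂ} {u : Fin 2 → GaussianInt} {l : ℂ}
    (hv : ∀ j, v j = l * (u j : ℂ)) (j : Fin 2) :
    (M.mulVec v) j = (l / 5) * ((N j 0 * u 0 + N j 1 * u 1 : GaussianInt) : ℂ) := by
  have : (M.mulVec v) j = M j 0 * v 0 + M j 1 * v 1 := by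
    simp [Matrix.mulVec, dotProduct, Fin.sum_univ_two]
  rw [this, hMN j 0, hMN j 1, hv 0, hv 1]
  simp only [_root_.map_add, _root_.map_mul]
  ring

lemma inLine_mulVec {M : Matrix (Fin 2) (Fin 2) ℂ} {N : Fin 2 → Fin 2 → GaussianInt}
    (hMN : ∀ i j, M i j = (N i j : ℂ) / 5) {m m' : Option (ZMod 5)} {v : Fin 2 → ℂ}
    (h : inLine m v)
    (hc : ∀ c0 c1 : ZMod 5, lineP m c0 c1 →
      lineP m' (phi (N 0 0) * c0 + phi (N 0 1) * c1) (phi (N 1 0) * c0 + phi (N 1 1) * c1)) :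
    inLine m' (M.mulVec v) := by
  obtain ⟨u, l, hl, hv, hcl⟩ := h
  refine ⟨![N 0 0 * u 0 + N 0 1 * u 1, N 1 0 * u 0 + N 1 1 * u 1], l / 5,
    div_ne_zero hl (by norm_num), ?_, ?_⟩
  · intro j
    fin_cases j <;> [simpa using mulVec_rep hMN hv 0; simpa using mulVec_rep hMN hv 1]
  · simpa [_root_.map_add, _root_.map_mul] using hc _ _ hcl

lemma hasClass_mulVec {M : Matrix (Fin 2) (Fin 2) ℂ} {N : Fin 2 → Fin 2 → GaussianInt}
    (hMN : ∀ i j, M i j = (N i j : ℂ) / 5)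
    (hdet : N 0 0 * N 1 1 - N 0 1 * N 1 0 ≠ 0) {v : Fin 2 → ℂ}
    (h : hasClass v) : hasClass (M.mulVec v) := by
  obtain ⟨u, l, hl, hv, hcl⟩ := h
  have hu : u ≠ 0 := by
    intro h0
    have h00 : u 0 = 0 := congrFun h0 0
    have h01 : u 1 = 0 := congrFun h0 1
    rcases hcl with hc | hc <;> simp [h00, h01] at hc
  refine hasClass_of_rep (l := l / 5)
    (u := ![N 0 0 * u 0 + N 0 1 * u 1, N 1 0 * u 0 + N 1 1 * u 1])
    (div_ne_zero hl (by norm_num)) (fun j => by fin_cases j <;> [simpa using mulVec_rep hMN hv 0; simpa using mulVec_rep hMN hv 1]) ?_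
  intro h0
  have e0 : N 0 0 * u 0 + N 0 1 * u 1 = 0 := by simpa using congrFun h0 0
  have e1 : N 1 0 * u 0 + N 1 1 * u 1 = 0 := by simpa using congrFun h0 1
  apply hu
  funext j
  have hu0 : (N 0 0 * N 1 1 - N 0 1 * N 1 0) * u 0 = 0 := by
    linear_combination N 1 1 * e0 - N 0 1 * e1
  have hu1 : (N 0 0 * N 1 1 - N 0 1 * N 1 0) * u 1 = 0 := by
    linear_combination N 0 0 * e1 - N 1 0 * e0
  have : j = 0 ∨ j = 1 := by rcases j with ⟨jv, hj⟩; interval_cases jv <;> simp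
  rcases this with rfl | rfl
  · exact (mul_eq_zero.mp hu0).resolve_left hdet
  · exact (mul_eq_zero.mp hu1).resolve_left hdet

def NA : Fin 2 → Fin 2 → GaussianInt := ![![⟨3,4⟩, 0], ![0, ⟨3,-4⟩]]
def NA' : Fin 2 → Fin 2 → GaussianInt := ![![⟨3,-4⟩, 0], ![0, ⟨3,4⟩]]
def NB : Fin 2 → Fin 2 → GaussianInt := ![![3, 4], ![-4, 3]]
def NB' : Fin 2 → Fin 2 → GaussianInt := ![![3, -4], ![4, 3]]

lemma hNA : ∀ i j, Amat i j = (NA i j : ℂ) / 5 := by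
  intro i j
  fin_cases i <;> fin_cases j <;>
    simp [Amat, NA, toComplex_def'] <;> push_cast <;> ring

lemma hNA' : ∀ i j, Amatᴴ i j = (NA' i j : ℂ) / 5 := by
  intro i j
  fin_cases i <;> fin_cases j <;>
    simp [Amat, NA', toComplex_def', Matrix.conjTranspose_apply] <;>
    simp [Complex.ext_iff] <;> push_cast <;> norm_num

lemma hNB : ∀ i j, Bmat i j = (NB i j : ℂ) / 5 := by
  intro i j
  fin_cases i <;> fin_cases j <;>
    simp [Bmat, NB, toComplex_def', map_ofNat, _root_.map_neg] <;> norm_num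

lemma hNB' : ∀ i j, Bmatᴴ i j = (NB' i j : ℂ) / 5 := by
  intro i j
  fin_cases i <;> fin_cases j <;>
    simp [Bmat, NB', toComplex_def', Matrix.conjTranspose_apply, map_ofNat, _root_.map_neg] <;>
    norm_num


lemma stepA_arith : ∀ (m : Option (ZMod 5)), m ≠ none → ∀ c0 c1 : ZMod 5, lineP m c0 c1 →
    lineP (some 0) (0 * c0 + 0 * c1) (0 * c0 + 1 * c1) := by decide

lemma stepA'_arith : ∀ (m : Option (ZMod 5)), m ≠ some 0 → ∀ c0 c1 : ZMod 5, lineP m c0 c1 →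
    lineP none (1 * c0 + 0 * c1) (0 * c0 + 0 * c1) := by decide

lemma stepB_arith : ∀ (m : Option (ZMod 5)), m ≠ some 2 → ∀ c0 c1 : ZMod 5, lineP m c0 c1 →
    lineP (some 3) (3 * c0 + 4 * c1) (1 * c0 + 3 * c1) := by decide

lemma stepB'_arith : ∀ (m : Option (ZMod 5)), m ≠ some 3 → ∀ c0 c1 : ZMod 5, lineP m c0 c1 →
    lineP (some 2) (3 * c0 + 1 * c1) (4 * c0 + 3 * c1) := by decide

/-! ### Concrete step lemmas -/

lemma stepA {m} (hm : m ≠ none) {v} (h : inLine m v) : inLine (some 0) (Amat.mulVec v) := by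
  refine inLine_mulVec hNA h ?_
  have e00 : phi (NA 0 0) = 0 := by decide
  have e01 : phi (NA 0 1) = 0 := by decide
  have e10 : phi (NA 1 0) = 0 := by decide
  have e11 : phi (NA 1 1) = 1 := by decide
  rw [e00, e01, e10, e11]
  exact stepA_arith m hm

lemma stepA' {m} (hm : m ≠ some 0) {v} (h : inLine m v) : inLine none (Amatᴴ.mulVec v) := by
  refine inLine_mulVec hNA' h ?_
  have e00 : phi (NA' 0 0) = 1 := by decide
  have e01 : phi (NA' 0 1) = 0 := by decide
  have e10 : phi (NA' 1 0) = 0 := by decide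
  have e11 : phi (NA' 1 1) = 0 := by decide
  rw [e00, e01, e10, e11]
  exact stepA'_arith m hm

lemma stepB {m} (hm : m ≠ some 2) {v} (h : inLine m v) : inLine (some 3) (Bmat.mulVec v) := by
  refine inLine_mulVec hNB h ?_
  have e00 : phi (NB 0 0) = 3 := by decide
  have e01 : phi (NB 0 1) = 4 := by decide
  have e10 : phi (NB 1 0) = 1 := by decide
  have e11 : phi (NB 1 1) = 3 := by decide
  rw [e00, e01, e10, e11]
  exact stepB_arith m hm

lemma stepB' {m} (hm : m ≠ some 3) {v} (h : inLine m v) : inLine (some 2) (Bmatᴴ.mulVec v) := by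
  refine inLine_mulVec hNB' h ?_
  have e00 : phi (NB' 0 0) = 3 := by decide
  have e01 : phi (NB' 0 1) = 1 := by decide
  have e10 : phi (NB' 1 0) = 4 := by decide
  have e11 : phi (NB' 1 1) = 3 := by decide
  rw [e00, e01, e10, e11]
  exact stepB'_arith m hm

lemma hcA {v} : hasClass v → hasClass (Amat.mulVec v) := hasClass_mulVec hNA (by decide)
lemma hcA' {v} : hasClass v → hasClass (Amatᴴ.mulVec v) := hasClass_mulVec hNA' (by decide)
lemma hcB {v} : hasClass v → hasClass (Bmat.mulVec v) := hasClass_mulVec hNB (by decide)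
lemma hcB' {v} : hasClass v → hasClass (Bmatᴴ.mulVec v) := hasClass_mulVec hNB' (by decide)

/-! ### The SU(2) elements and the subgroup they generate -/

lemma Amat_unitary : Amat ∈ Matrix.unitaryGroup (Fin 2) ℂ := by
  rw [Matrix.mem_unitaryGroup_iff]
  ext i j
  fin_cases i <;> fin_cases j <;>
    simp [Amat, Matrix.mul_apply, Fin.sum_univ_two, Matrix.one_apply,
      Matrix.star_eq_conjTranspose, Matrix.conjTranspose_apply, map_ofNat,
      Complex.ext_iff, Complex.div_re, Complex.div_im, Complex.normSq_apply] <;>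
    norm_num

lemma Bmat_unitary : Bmat ∈ Matrix.unitaryGroup (Fin 2) ℂ := by
  rw [Matrix.mem_unitaryGroup_iff]
  ext i j
  fin_cases i <;> fin_cases j <;>
    simp [Bmat, Matrix.mul_apply, Fin.sum_univ_two, Matrix.one_apply,
      Matrix.star_eq_conjTranspose, Matrix.conjTranspose_apply, map_ofNat,
      Complex.ext_iff, Complex.div_re, Complex.div_im, Complex.normSq_apply] <;>
    norm_num

def Agen : SU2 := ⟨⟨Amat, Amat_unitary⟩, by
  show Amat.det = 1
  simp [Amat, Matrix.det_fin_two_of, Complex.ext_iff, Complex.div_re, Complex.div_im,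
    Complex.normSq_apply]
  norm_num⟩

def Bgen : SU2 := ⟨⟨Bmat, Bmat_unitary⟩, by
  show Bmat.det = 1
  simp [Bmat, Matrix.det_fin_two_of, Complex.ext_iff, Complex.div_re, Complex.div_im,
    Complex.normSq_apply]
  norm_num⟩

def mat (g : SU2) : Matrix (Fin 2) (Fin 2) ℂ := g.val.val

lemma mat_one : mat 1 = 1 := rfl
lemma mat_mul (g h : SU2) : mat (g * h) = mat g * mat h := rfl
lemma mat_inv (g : SU2) : mat g⁻¹ = (mat g)ᴴ := by
  show ((g⁻¹ : SU2) : Matrix.unitaryGroup (Fin 2) ℂ).val = _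
  rw [show ((g⁻¹ : SU2) : Matrix.unitaryGroup (Fin 2) ℂ) = (g : Matrix.unitaryGroup (Fin 2) ℂ)⁻¹
    from rfl, Matrix.UnitaryGroup.inv_val, Matrix.star_eq_conjTranspose]
  rfl

lemma mat_Agen : mat Agen = Amat := rfl
lemma mat_Bgen : mat Bgen = Bmat := rfl

def H : Subgroup SU2 := Subgroup.closure {Agen, Bgen}

lemma H_pres : ∀ g ∈ H, ∀ v, hasClass v → hasClass ((mat g).mulVec v) := by
  have main : ∀ g ∈ H, (∀ v, hasClass v → hasClass ((mat g).mulVec v)) ∧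
      (∀ v, hasClass v → hasClass ((mat g⁻¹).mulVec v)) := by
    intro g hg
    induction hg using Subgroup.closure_induction with
    | mem x hx =>
      rcases hx with rfl | rfl
      · exact ⟨fun v => by rw [mat_Agen]; exact hcA,
          fun v => by rw [mat_inv, mat_Agen]; exact hcA'⟩
      · exact ⟨fun v => by rw [mat_Bgen]; exact hcB,
          fun v => by rw [mat_inv, mat_Bgen]; exact hcB'⟩
    | one => exact ⟨fun v => by rw [mat_one, Matrix.one_mulVec]; exact id,
        fun v => by rw [inv_one, mat_one, Matrix.one_mulVec]; exact id⟩
    | mul x y hx hy ihx ihy =>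
      constructor
      · intro v hv
        rw [mat_mul, ← Matrix.mulVec_mulVec]
        exact ihx.1 _ (ihy.1 _ hv)
      · intro v hv
        rw [_root_.mul_inv_rev, mat_mul, ← Matrix.mulVec_mulVec]
        exact ihy.2 _ (ihx.2 _ hv)
    | inv x hx ihx => exact ⟨ihx.2, fun v => by rw [inv_inv]; exact ihx.1 v⟩
  exact fun g hg => (main g hg).1

/-- The space that `H` acts on: complex 2-vectors with a nonzero mod-5 class. -/
def PT : Type := {v : Fin 2 → ℂ // hasClass v}

instance : MulAction H PT where
  smul g v := ⟨(mat g.1).mulVec v.1, H_pres g.1 g.2 v.1 v.2⟩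
  one_smul v := Subtype.ext (by
    show (mat ((1 : H) : SU2)).mulVec v.1 = v.1
    rw [show ((1 : H) : SU2) = 1 from rfl, mat_one, Matrix.one_mulVec])
  mul_smul x y v := Subtype.ext (by
    show (mat ((x * y : H) : SU2)).mulVec v.1 = (mat x.1).mulVec ((mat y.1).mulVec v.1)
    rw [show ((x * y : H) : SU2) = x.1 * y.1 from rfl, mat_mul, Matrix.mulVec_mulVec])

lemma smul_val (g : H) (v : PT) : (g • v).1 = (mat g.1).mulVec v.1 := rfl

def LS (m : Option (ZMod 5)) : Set PT := {v | inLine m v.1}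

def AH : H := ⟨Agen, Subgroup.subset_closure (by simp)⟩
def BH : H := ⟨Bgen, Subgroup.subset_closure (by simp)⟩

lemma AH_smul_mem {m} (hm : m ≠ none) {v : PT} (hv : v ∈ LS m) : AH • v ∈ LS (some 0) :=
  stepA hm hv

lemma AHinv_smul_mem {m} (hm : m ≠ some 0) {v : PT} (hv : v ∈ LS m) : AH⁻¹ • v ∈ LS none := by
  show inLine none ((mat ((AH⁻¹ : H) : SU2)).mulVec v.1)
  rw [show ((AH⁻¹ : H) : SU2) = Agen⁻¹ from rfl, mat_inv, mat_Agen]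
  exact stepA' hm hv

lemma BH_smul_mem {m} (hm : m ≠ some 2) {v : PT} (hv : v ∈ LS m) : BH • v ∈ LS (some 3) :=
  stepB hm hv

lemma BHinv_smul_mem {m} (hm : m ≠ some 3) {v : PT} (hv : v ∈ LS m) : BH⁻¹ • v ∈ LS (some 2) := by
  show inLine (some 2) ((mat ((BH⁻¹ : H) : SU2)).mulVec v.1)
  rw [show ((BH⁻¹ : H) : SU2) = Bgen⁻¹ from rfl, mat_inv, mat_Bgen]
  exact stepB' hm hv

lemma pow_smul_mem : ∀ (k : ℕ), k ≠ 0 → ∀ {m}, m ≠ none → ∀ {v}, v ∈ LS m →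
    (AH ^ k) • v ∈ LS (some 0) := by
  intro k
  induction k with
  | zero => exact fun h => absurd rfl h
  | succ k ih =>
    intro _ m hm v hv
    rcases Nat.eq_zero_or_pos k with rfl | hk
    · simpa using AH_smul_mem hm hv
    · rw [pow_succ, mul_smul]
      exact ih (Nat.pos_iff_ne_zero.mp hk) (by simp) (AH_smul_mem hm hv)

lemma pow_inv_smul_mem : ∀ (k : ℕ), k ≠ 0 → ∀ {m}, m ≠ some 0 → ∀ {v}, v ∈ LS m →
    ((AH ^ k)⁻¹) • v ∈ LS none := by
  have key : ∀ (k : ℕ), k ≠ 0 → ∀ {m}, m ≠ some 0 → ∀ {v : PT}, v ∈ LS m →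
      (AH⁻¹ ^ k) • v ∈ LS none := by
    intro k
    induction k with
    | zero => exact fun h => absurd rfl h
    | succ k ih =>
      intro _ m hm v hv
      rcases Nat.eq_zero_or_pos k with rfl | hk
      · simpa using AHinv_smul_mem hm hv
      · rw [pow_succ, mul_smul]
        exact ih (Nat.pos_iff_ne_zero.mp hk) (by simp) (AHinv_smul_mem hm hv)
  intro k hk m hm v hv
  rw [← inv_pow]
  exact key k hk hm hv

lemma LS_disj {m m'} (h : m ≠ m') : Disjoint (LS m) (LS m') :=
  Set.disjoint_left.mpr fun _ hx hx' => h (line_unique hx hx')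

lemma disjHelp {m m'} (hm : m ≠ some 0) (hm' : m' ≠ none) {i j : ℕ} (hij : i < j) :
    Disjoint ((AH ^ i) • LS m) ((AH ^ j) • LS m') := by
  have hj : (AH ^ j) • LS m' = (AH ^ i) • ((AH ^ (j - i)) • LS m') := by
    rw [smul_smul, ← pow_add]
    congr 2
    omega
  rw [hj, Set.disjoint_smul_set]
  refine Set.disjoint_left.mpr ?_
  rintro x hx ⟨y, hy, rfl⟩
  exact hm (line_unique hx (pow_smul_mem _ (by omega) hm' hy))

/-! ### Ping-pong data -/

def gens (q : ℕ) : Fin q → H := fun i => AH ^ (i : ℕ) * BH * (AH ^ (i : ℕ))⁻¹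
def Xs (q : ℕ) : Fin q → Set PT := fun i => (AH ^ (i : ℕ)) • LS (some 3)
def Ys (q : ℕ) : Fin q → Set PT := fun i => (AH ^ (i : ℕ)) • LS (some 2)

set_option maxHeartbeats 1000000 in
lemma lift_injective (m : ℕ) :
    Function.Injective (FreeGroup.lift (gens (m + 2)) : FreeGroup (Fin (m + 2)) →* H) := by
  apply FreeGroup.injective_lift_of_ping_pong (gens (m + 2)) (Xs (m + 2)) (Ys (m + 2))
  · -- nonempty
    intro i
    have hline : inLine (some 3) ![(3 : ℂ), 1] := by
      refine ⟨![⟨3, 0⟩, ⟨1, 0⟩], 1, one_ne_zero, ?_, by decide⟩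
      intro j
      fin_cases j <;> simp [toComplex_def']
    exact ⟨(AH ^ (i : ℕ)) • ⟨![(3 : ℂ), 1], hasClass_of_inLine hline⟩,
      Set.smul_mem_smul_set hline⟩
  · -- X disjoint
    intro i j hij
    rcases lt_or_gt_of_ne (fun h => hij (Fin.val_injective h)) with h | h
    · exact disjHelp (by decide) (by decide) h
    · exact (disjHelp (by decide) (by decide) h).symm
  · -- Y disjoint
    intro i j hij
    rcases lt_or_gt_of_ne (fun h => hij (Fin.val_injective h)) with h | h
    · exact disjHelp (by decide) (by decide) h
    · exact (disjHelp (by decide) (by decide) h).symm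
  · -- X vs Y disjoint
    intro i j
    rcases lt_trichotomy (i : ℕ) (j : ℕ) with h | h | h
    · exact disjHelp (by decide) (by decide) h
    · have hji : j = i := Fin.ext h.symm
      subst hji
      show Disjoint ((AH ^ (j : ℕ)) • LS (some 3)) ((AH ^ (j : ℕ)) • LS (some 2))
      exact (Set.disjoint_smul_set).mpr (LS_disj (by decide))
    · exact (disjHelp (by decide) (by decide) h).symm
  · -- ping
    intro i
    have hsub : BH • (LS (some 2))ᶜ ⊆ LS (some 3) := by
      rintro x ⟨v, hv, rfl⟩
      obtain ⟨mm, hmm⟩ := exists_line_of_hasClass v.2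
      exact BH_smul_mem (fun h => hv (h ▸ hmm)) hmm
    have : gens (m+2) i • (Ys (m+2) i)ᶜ = (AH ^ (i : ℕ)) • (BH • (LS (some 2))ᶜ) := by
      show gens (m+2) i • ((AH ^ (i : ℕ)) • LS (some 2))ᶜ = _
      rw [← Set.smul_set_compl, smul_smul, smul_smul, gens]
      congr 1
      group
    rw [this]
    exact Set.smul_set_mono hsub
  · -- pong
    intro i
    have hsub : BH⁻¹ • (LS (some 3))ᶜ ⊆ LS (some 2) := by
      rintro x ⟨v, hv, rfl⟩
      obtain ⟨mm, hmm⟩ := exists_line_of_hasClass v.2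
      exact BHinv_smul_mem (fun h => hv (h ▸ hmm)) hmm
    rw [Pi.inv_apply]
    have : (gens (m+2) i)⁻¹ • (Xs (m+2) i)ᶜ = (AH ^ (i : ℕ)) • (BH⁻¹ • (LS (some 3))ᶜ) := by
      show (gens (m+2) i)⁻¹ • ((AH ^ (i : ℕ)) • LS (some 3))ᶜ = _
      rw [← Set.smul_set_compl, smul_smul, smul_smul, gens]
      congr 1
      group
    rw [this]
    exact Set.smul_set_mono hsub

end SU2PingPong

end

/-- For every `n`, SU(2) contains a subgroup freely generated by `n` elements:
the free group on `n` generators embeds into SU(2). -/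
theorem freeGroup_embeds_into_su2 (n : ℕ) :
    ∃ φ : FreeGroup (Fin n) →* SU2, Function.Injective φ := by
  match n with
  | 0 =>
    exact ⟨1, fun x y _ => Subsingleton.elim x y⟩
  | (m + 1) =>
    classical
    refine ⟨(SU2PingPong.H.subtype.comp
      (FreeGroup.lift (SU2PingPong.gens (m + 2)))).comp
      (FreeGroup.map (Fin.castSucc : Fin (m + 1) → Fin (m + 2))), ?_⟩
    have hmap : Function.Injective
        (FreeGroup.map (Fin.castSucc : Fin (m + 1) → Fin (m + 2))) := by
      set r : Fin (m + 2) → Fin (m + 1) :=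
        fun i => if h : (i : ℕ) < m + 1 then ⟨(i : ℕ), h⟩ else 0 with hr
      have hret : r ∘ (Fin.castSucc : Fin (m + 1) → Fin (m + 2)) = id := by
        funext i
        simp only [Function.comp_apply, hr, Fin.coe_castSucc, id_eq]
        rw [dif_pos i.isLt]
      apply Function.LeftInverse.injective (g := FreeGroup.map r)
      intro x
      rw [FreeGroup.map.comp, hret, FreeGroup.map.id]
    simp only [MonoidHom.coe_comp]
    exact (SU2PingPong.H.subtype_injective.comp (SU2PingPong.lift_injective m)).comp hmap
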